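/- Fix a Newton diagram datum: an integer n ≥ 1 and lattice points (P₀,Q₀),…,(Pₙ,Qₙ) ∈ ℤ² with P₀ = 0, Qₙ = 0, P₀ < P₁ < … < Pₙ, Q₀ > Q₁ > … > Qₙ, p = Pₙ, q = Q₀, pᵢ = Pᵢ − Pᵢ₋₁, qᵢ = Qᵢ₋₁ − Qᵢ, q₁/p₁ > … > qₙ/pₙ, and gcd(pᵢ,qᵢ) = 1 for each i. Let Γ₋ be the closure of (ℝ≥0)² \ (conv{(P₀,Q₀),…,(Pₙ,Qₙ)} + (ℝ≥0)²). Then the number of pairs (i,j) of nonnegative integers with S(i,j) = [i,i+1] × [j,j+1] ⊆ Γ₋ equals Σ_{i=1}^{n} (pᵢ−1)(qᵢ−1)/2 + Σ_{i=1}^{n−1} pᵢQᵢ. -/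

import Mathlib

open Set MeasureTheory Pointwise

/-- The unit lattice square `S(i,j) = [i,i+1] × [j,j+1] ⊆ ℝ²`. -/
def unitSq (i j : ℤ) : Set (ℝ × ℝ) :=
  Set.Icc (i : ℝ) (i + 1) ×ˢ Set.Icc (j : ℝ) (j + 1)

/-- The region `Γ₋`: the closure of `(ℝ≥0)² \ (conv{(P₀,Q₀),…,(Pₙ,Qₙ)} + (ℝ≥0)²)`,
where `+` denotes the Minkowski sum. -/
def gammaMinus (n : ℕ) (P Q : ℕ → ℤ) : Set (ℝ × ℝ) :=
  closure ((Set.Ici (0 : ℝ) ×ˢ Set.Ici (0 : ℝ)) \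
    (convexHull ℝ {x : ℝ × ℝ | ∃ i ≤ n, x = ((P i : ℝ), (Q i : ℝ))} +
      Set.Ici (0 : ℝ) ×ˢ Set.Ici (0 : ℝ)))

namespace NDP
open Filter Topology

lemma neg_ediv_eq {a p : ℤ} (hp : 0 < p) (h : ¬ (p ∣ a)) : (-a) / p = -(a/p) - 1 := by
  have h1 := Int.mul_ediv_add_emod a p
  have h2 : a % p ≠ 0 := fun hz => h (Int.dvd_of_emod_eq_zero hz)
  have h3 : 0 ≤ a % p := Int.emod_nonneg a hp.ne'
  have h4 : a % p < p := Int.emod_lt_of_pos a hp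
  have key : -a = (p - a % p) + p * (-(a/p) - 1) := by linarith
  rw [key, Int.add_mul_ediv_left _ _ hp.ne', Int.ediv_eq_zero_of_lt (by omega) (by omega)]
  ring

lemma not_dvd_mul_of_coprime {p q t : ℤ} (hp : 0 < p) (hg : Int.gcd p q = 1)
    (ht0 : 0 < t) (htp : t < p) : ¬ (p ∣ q * t) := by
  intro hdvd
  have hc : IsCoprime p q := Int.isCoprime_iff_gcd_eq_one.mpr hg
  have : p ∣ t := hc.dvd_of_dvd_mul_left hdvd
  have := Int.le_of_dvd ht0 this
  omega

lemma sum_ediv_reciprocity {p q : ℤ} (hp : 0 < p) (hq : 0 < q) (hg : Int.gcd p q = 1) :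
    2 * ∑ t ∈ Finset.Icc 1 (p-1), (q * t) / p = (p - 1) * (q - 1) := by
  have hrev : ∑ t ∈ Finset.Icc 1 (p-1), (q * t) / p
      = ∑ t ∈ Finset.Icc 1 (p-1), (q * (p - t)) / p := by
    apply Finset.sum_nbij' (fun t => p - t) (fun t => p - t) <;>
      simp (config := {contextual := true}) [Finset.mem_Icc] <;> omega
  have hpair : ∀ t ∈ Finset.Icc 1 (p-1), (q*t)/p + (q*(p-t))/p = q - 1 := by
    intro t ht
    simp only [Finset.mem_Icc] at ht
    have hnd : ¬ (p ∣ q * t) := not_dvd_mul_of_coprime hp hg (by omega) (by omega)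
    have : q * (p - t) = -(q*t) + p * q := by ring
    rw [this, Int.add_mul_ediv_left _ _ hp.ne', neg_ediv_eq hp hnd]
    ring
  have hcard : (Finset.Icc 1 (p-1)).card = (p-1).toNat := by
    rw [Int.card_Icc]; congr 1; omega
  calc 2 * ∑ t ∈ Finset.Icc 1 (p-1), (q * t) / p
      = ∑ t ∈ Finset.Icc 1 (p-1), ((q*t)/p + (q*(p-t))/p) := by
        rw [Finset.sum_add_distrib, ← hrev]; ring
    _ = ∑ t ∈ Finset.Icc 1 (p-1), (q - 1) := Finset.sum_congr rfl hpair
    _ = (p - 1) * (q - 1) := by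
        rw [Finset.sum_const, hcard, nsmul_eq_mul]
        congr 1; omega

lemma Icc_int_insert_top {a b : ℤ} (h : a ≤ b) :
    Finset.Icc a b = insert b (Finset.Icc a (b-1)) := by
  ext t; simp only [Finset.mem_Icc, Finset.mem_insert]; omega

/-- per-block sum -/
lemma block_sum {p q Qv : ℤ} (hp : 0 < p) (hq : 0 < q) (hg : Int.gcd p q = 1) :
    ∑ t ∈ Finset.Icc 1 p, (p * Qv - q * t) / p
      = p * (Qv - q) + ((p-1) * (q-1)) / 2 := by
  have hterm : ∀ t ∈ Finset.Icc 1 p, (p * Qv - q * t) / p = Qv + (-(q*t))/p := by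
    intro t ht
    have : p * Qv - q * t = -(q*t) + p * Qv := by ring
    rw [this, Int.add_mul_ediv_left _ _ hp.ne']; ring
  have h3 : ∀ t ∈ Finset.Icc 1 (p-1), (-(q*t))/p = -((q*t)/p) - 1 := by
    intro t ht
    simp only [Finset.mem_Icc] at ht
    exact neg_ediv_eq hp (not_dvd_mul_of_coprime hp hg (by omega) (by omega))
  have h2 : ∑ t ∈ Finset.Icc 1 p, (-(q*t))/p
      = -q + (-(∑ t ∈ Finset.Icc 1 (p-1), (q*t)/p) - (p-1)) := by
    rw [Icc_int_insert_top (show (1:ℤ) ≤ p by omega), Finset.sum_insert (by simp)]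
    congr 1
    · have : -(q*p) = 0 + p * (-q) := by ring
      rw [this, Int.add_mul_ediv_left _ _ hp.ne', Int.zero_ediv, zero_add]
    · rw [Finset.sum_congr rfl h3, Finset.sum_sub_distrib, Finset.sum_const,
        Int.card_Icc, ← Finset.sum_neg_distrib, nsmul_eq_mul]
      have : ((p - 1 + 1 - 1).toNat : ℤ) = p - 1 := by omega
      rw [this]; ring
  have hrec := sum_ediv_reciprocity hp hq hg
  set S := ∑ t ∈ Finset.Icc 1 (p-1), (q*t)/p with hS
  have hD : ((p-1) * (q-1)) / 2 = S := by omega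
  have hcard : ((Finset.Icc (1:ℤ) p).card : ℤ) = p := by
    rw [Int.card_Icc]; omega
  rw [Finset.sum_congr rfl hterm, Finset.sum_add_distrib, Finset.sum_const,
    nsmul_eq_mul, hcard, h2, hD]
  nlinarith [hrec]


section ND
variable (n : ℕ) (P Q : ℕ → ℤ)

lemma Pmono' (hPmono : ∀ i < n, P i < P (i + 1)) :
    ∀ a b, a ≤ b → b ≤ n → P a ≤ P b := by
  intro a b hab hbn
  induction b with
  | zero => have : a = 0 := by omega
            simp [this]
  | succ m ih =>
    rcases Nat.eq_or_lt_of_le hab with h | h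
    · rw [h]
    · have := ih (by omega) (by omega)
      have := hPmono m (by omega)
      omega

lemma Qmono' (hQmono : ∀ i < n, Q (i + 1) < Q i) :
    ∀ a b, a ≤ b → b ≤ n → Q b ≤ Q a := by
  intro a b hab hbn
  induction b with
  | zero => have : a = 0 := by omega
            simp [this]
  | succ m ih =>
    rcases Nat.eq_or_lt_of_le hab with h | h
    · rw [h]
    · have := ih (by omega) (by omega)
      have := hQmono m (by omega)
      omega

lemma slope_adj (hconv : ∀ i, 1 ≤ i → i < n →
      ((Q (i - 1) - Q i : ℤ) : ℚ) / ((P i - P (i - 1) : ℤ) : ℚ) >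
        ((Q i - Q (i + 1) : ℤ) : ℚ) / ((P (i + 1) - P i : ℤ) : ℚ))
    (hPmono : ∀ i < n, P i < P (i + 1)) :
    ∀ i, 1 ≤ i → i < n →
      (Q i - Q (i+1)) * (P i - P (i-1)) < (Q (i-1) - Q i) * (P (i+1) - P i) := by
  intro i h1 h2
  have hd1 : (0:ℚ) < ((P i - P (i-1) : ℤ) : ℚ) := by
    have := hPmono (i-1) (by omega)
    have : (0:ℤ) < P i - P (i-1) := by
      have h' : i - 1 + 1 = i := by omega
      rw [h'] at this; omega
    exact_mod_cast this
  have hd2 : (0:ℚ) < ((P (i+1) - P i : ℤ) : ℚ) := by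
    have := hPmono i (by omega)
    have : (0:ℤ) < P (i+1) - P i := by omega
    exact_mod_cast this
  have h := hconv i h1 h2
  rw [gt_iff_lt, div_lt_div_iff₀ hd2 hd1] at h
  exact_mod_cast h

lemma cross (hconv : ∀ i, 1 ≤ i → i < n →
      ((Q (i - 1) - Q i : ℤ) : ℚ) / ((P i - P (i - 1) : ℤ) : ℚ) >
        ((Q i - Q (i + 1) : ℤ) : ℚ) / ((P (i + 1) - P i : ℤ) : ℚ))
    (hPmono : ∀ i < n, P i < P (i + 1))
    (hQmono : ∀ i < n, Q (i + 1) < Q i) :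
    ∀ a b, 1 ≤ a → a ≤ b → b ≤ n →
      (Q (b-1) - Q b) * (P a - P (a-1)) ≤ (Q (a-1) - Q a) * (P b - P (b-1)) := by
  intro a b ha hab hbn
  induction b, hab using Nat.le_induction with
  | base => exact le_refl _
  | succ m hm ih =>
    have hmn : m < n := by omega
    have ih' := ih (by omega)
    have hadj := slope_adj n P Q hconv hPmono m (by omega) hmn
    have hs : m + 1 - 1 = m := by omega
    rw [hs]
    have hqm : 0 < Q (m-1) - Q m := by
      have := hQmono (m-1) (by omega)
      have h' : m - 1 + 1 = m := by omega
      rw [h'] at this; omega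
    have hqm1 : 0 ≤ Q m - Q (m+1) := by
      have := hQmono m hmn; omega
    have hpa : 0 < P a - P (a-1) := by
      have := hPmono (a-1) (by omega)
      have h' : a - 1 + 1 = a := by omega
      rw [h'] at this; omega
    rw [hs] at *
    have hqa : 0 ≤ Q (a-1) - Q a := by
      have := hQmono (a-1) (by omega)
      have h' : a - 1 + 1 = a := by omega
      rw [h'] at this; omega
    have A := mul_le_mul_of_nonneg_left ih' hqm1
    have B := mul_le_mul_of_nonneg_left hadj.le hqa
    have key : (Q (m-1) - Q m) * ((Q m - Q (m+1)) * (P a - P (a-1)))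
        ≤ (Q (m-1) - Q m) * ((Q (a-1) - Q a) * (P (m+1) - P m)) := by nlinarith [A, B]
    exact le_of_mul_le_mul_left key hqm
end ND


lemma telesc (f : ℕ → ℤ) : ∀ m k, m ≤ k → ∑ j ∈ Finset.Ioc m k, (f j - f (j-1)) = f k - f m := by
  intro m k hmk
  induction k, hmk using Nat.le_induction with
  | base => simp
  | succ b hb ih =>
    rw [Finset.sum_Ioc_succ_top hb, ih]
    have : b + 1 - 1 = b := by omega
    rw [this]; ring

section ND
variable (n : ℕ) (P Q : ℕ → ℤ)

/-- vertex k lies (weakly) above the line supporting segment m -/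
lemma vertex_above
    (hPmono : ∀ i < n, P i < P (i + 1))
    (hQmono : ∀ i < n, Q (i + 1) < Q i)
    (hcross : ∀ a b, 1 ≤ a → a ≤ b → b ≤ n →
      (Q (b-1) - Q b) * (P a - P (a-1)) ≤ (Q (a-1) - Q a) * (P b - P (b-1))) :
    ∀ m k, 1 ≤ m → m ≤ n → k ≤ n →
      (Q (m-1) - Q m) * P m + (P m - P (m-1)) * Q m
        ≤ (Q (m-1) - Q m) * P k + (P m - P (m-1)) * Q k := by
  intro m k hm1 hmn hkn
  rcases le_or_gt m k with h | h
  · -- k ≥ m : q_m (P k - P m) ≥ p_m (Q m - Q k)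
    have hP : P k - P m = ∑ j ∈ Finset.Ioc m k, (P j - P (j-1)) := (telesc P m k h).symm
    have hQ : Q k - Q m = ∑ j ∈ Finset.Ioc m k, (Q j - Q (j-1)) := (telesc Q m k h).symm
    have hterm : ∀ j ∈ Finset.Ioc m k,
        (P m - P (m-1)) * (-(Q j - Q (j-1))) ≤ (Q (m-1) - Q m) * (P j - P (j-1)) := by
      intro j hj
      simp only [Finset.mem_Ioc] at hj
      have := hcross m j hm1 (by omega) (by omega)
      have h' : (Q (j-1) - Q j) = -(Q j - Q (j-1)) := by ring
      linarith [this]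
    have hsum := Finset.sum_le_sum hterm
    rw [← Finset.mul_sum, ← Finset.mul_sum, ← hP] at hsum
    have hsneg : ∑ j ∈ Finset.Ioc m k, -(Q j - Q (j-1)) = -(Q k - Q m) := by
      rw [Finset.sum_neg_distrib, hQ]
    rw [hsneg] at hsum
    linarith
  · -- k < m : p_m (Q k - Q m) ≥ q_m (P m - P k)
    have h' : k ≤ m := by omega
    have hP : P m - P k = ∑ j ∈ Finset.Ioc k m, (P j - P (j-1)) := (telesc P k m h').symm
    have hQ : Q m - Q k = ∑ j ∈ Finset.Ioc k m, (Q j - Q (j-1)) := (telesc Q k m h').symm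
    have hterm : ∀ j ∈ Finset.Ioc k m,
        (Q (m-1) - Q m) * (P j - P (j-1)) ≤ (P m - P (m-1)) * (-(Q j - Q (j-1))) := by
      intro j hj
      simp only [Finset.mem_Ioc] at hj
      have := hcross j m (by omega) (by omega) hmn
      linarith [this]
    have hsum := Finset.sum_le_sum hterm
    rw [← Finset.mul_sum, ← Finset.mul_sum, ← hP] at hsum
    have hsneg : ∑ j ∈ Finset.Ioc k m, -(Q j - Q (j-1)) = -(Q m - Q k) := by
      rw [Finset.sum_neg_distrib, hQ]
    rw [hsneg] at hsum
    linarith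
end ND


def pkf (P : ℕ → ℤ) (k : ℕ) : ℤ := P k - P (k-1)
def qkf (Q : ℕ → ℤ) (k : ℕ) : ℤ := Q (k-1) - Q k
def cf (P Q : ℕ → ℤ) (k : ℕ) : ℤ := qkf Q k * P k + pkf P k * Q k
def NDcond (n : ℕ) (P Q : ℕ → ℤ) (ij : ℕ × ℕ) : Prop :=
  ∃ k, 1 ≤ k ∧ k ≤ n ∧
    qkf Q k * (ij.1+1) + pkf P k * (ij.2+1) ≤ cf P Q k

section ND2
variable (n : ℕ) (P Q : ℕ → ℤ)

lemma cf_eq (k : ℕ) : cf P Q k = qkf Q k * P (k-1) + pkf P k * Q (k-1) := by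
  unfold cf qkf pkf; ring

lemma line_cmp
    (hp : ∀ k, 1 ≤ k → k ≤ n → 0 < pkf P k)
    (hcross : ∀ a b, 1 ≤ a → a ≤ b → b ≤ n →
      qkf Q b * pkf P a ≤ qkf Q a * pkf P b)
    (hvert : ∀ m k, 1 ≤ m → m ≤ n → k ≤ n →
      cf P Q m ≤ qkf Q m * P k + pkf P m * Q k) :
    ∀ k m x, 1 ≤ k → k ≤ n → 1 ≤ m → m ≤ n → P (k-1) < x → x ≤ P k →
      pkf P k * (cf P Q m - qkf Q m * x) ≤ pkf P m * (cf P Q k - qkf Q k * x) := by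
  intro k m x hk1 hkn hm1 hmn hx1 hx2
  have hpk := hp k hk1 hkn
  have hck : cf P Q k - qkf Q k * P (k-1) = pkf P k * Q (k-1) := by
    unfold cf qkf pkf; ring
  have hck' : cf P Q k - qkf Q k * P k = pkf P k * Q k := by
    unfold cf qkf pkf; ring
  rcases le_or_gt m k with h | h
  · have hcoeff : 0 ≤ pkf P k * qkf Q m - pkf P m * qkf Q k := by
      have := hcross m k hm1 h hkn; linarith
    have hvv := hvert m (k-1) hm1 hmn (by omega)
    have e1 : pkf P k * cf P Q m
        ≤ pkf P k * (qkf Q m * P (k-1) + pkf P m * Q (k-1)) :=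
      mul_le_mul_of_nonneg_left hvv hpk.le
    have e2 : (pkf P k * qkf Q m - pkf P m * qkf Q k) * P (k-1)
        ≤ (pkf P k * qkf Q m - pkf P m * qkf Q k) * x :=
      mul_le_mul_of_nonneg_left hx1.le hcoeff
    have hck2 : pkf P m * (cf P Q k - qkf Q k * P (k-1))
        = pkf P m * (pkf P k * Q (k-1)) := by rw [hck]
    nlinarith [e1, e2, hck2]
  · have hcoeff : pkf P k * qkf Q m - pkf P m * qkf Q k ≤ 0 := by
      have := hcross k m hk1 h.le hmn; linarith
    have hvv := hvert m k hm1 hmn hkn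
    have e1 : pkf P k * cf P Q m
        ≤ pkf P k * (qkf Q m * P k + pkf P m * Q k) :=
      mul_le_mul_of_nonneg_left hvv hpk.le
    have e2 : (pkf P k * qkf Q m - pkf P m * qkf Q k) * P k
        ≤ (pkf P k * qkf Q m - pkf P m * qkf Q k) * x :=
      mul_le_mul_of_nonpos_left hx2 hcoeff
    have hck2 : pkf P m * (cf P Q k - qkf Q k * P k)
        = pkf P m * (pkf P k * Q k) := by rw [hck']
    nlinarith [e1, e2, hck2]

lemma col_iff
    (hp : ∀ k, 1 ≤ k → k ≤ n → 0 < pkf P k)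
    (hcross : ∀ a b, 1 ≤ a → a ≤ b → b ≤ n →
      qkf Q b * pkf P a ≤ qkf Q a * pkf P b)
    (hvert : ∀ m k, 1 ≤ m → m ≤ n → k ≤ n →
      cf P Q m ≤ qkf Q m * P k + pkf P m * Q k) :
    ∀ (i j k : ℕ), 1 ≤ k → k ≤ n → P (k-1) ≤ (i:ℤ) → (i:ℤ) < P k →
      (NDcond n P Q (i,j) ↔ pkf P k * ((j:ℤ)+1) ≤ cf P Q k - qkf Q k * ((i:ℤ)+1)) := by
  intro i j k hk1 hkn hi1 hi2
  constructor
  · rintro ⟨m, hm1, hmn, hle⟩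
    simp only at hle
    have hcmp := line_cmp n P Q hp hcross hvert k m ((i:ℤ)+1) hk1 hkn hm1 hmn
      (by omega) (by omega)
    have hpm := hp m hm1 hmn
    have hpk := hp k hk1 hkn
    have step : pkf P m * (pkf P k * ((j:ℤ)+1))
        ≤ pkf P m * (cf P Q k - qkf Q k * ((i:ℤ)+1)) := by
      calc pkf P m * (pkf P k * ((j:ℤ)+1))
          = pkf P k * (pkf P m * ((j:ℤ)+1)) := by ring
        _ ≤ pkf P k * (cf P Q m - qkf Q m * ((i:ℤ)+1)) := by
            apply mul_le_mul_of_nonneg_left _ hpk.le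
            linarith
        _ ≤ pkf P m * (cf P Q k - qkf Q k * ((i:ℤ)+1)) := hcmp
    exact le_of_mul_le_mul_left step hpm
  · intro h
    exact ⟨k, hk1, hkn, by simp only; linarith⟩

lemma block_exists (hP0 : P 0 = 0)
    (hPmono : ∀ i < n, P i < P (i + 1)) :
    ∀ m, m ≤ n → ∀ x : ℤ, 0 ≤ x → x < P m →
      ∃ k, 1 ≤ k ∧ k ≤ m ∧ P (k-1) ≤ x ∧ x < P k := by
  intro m
  induction m with
  | zero => intro _ x hx0 hxm; rw [hP0] at hxm; omega
  | succ b ih =>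
    intro hbn x hx0 hxm
    rcases lt_or_ge x (P b) with h | h
    · rcases Nat.eq_zero_or_pos b with hb | hb
      · subst hb; rw [hP0] at h; omega
      · obtain ⟨k, h1, h2, h3, h4⟩ := ih (by omega) x hx0 h
        exact ⟨k, h1, by omega, h3, h4⟩
    · exact ⟨b+1, by omega, le_refl _, by simpa using h, hxm⟩
end ND2

theorem count_arith (n : ℕ) (hn : 1 ≤ n) (P Q : ℕ → ℤ)
    (hP0 : P 0 = 0) (hQn : Q n = 0)
    (hPmono : ∀ i < n, P i < P (i + 1))
    (hQmono : ∀ i < n, Q (i + 1) < Q i)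
    (hconv : ∀ i, 1 ≤ i → i < n →
      ((Q (i - 1) - Q i : ℤ) : ℚ) / ((P i - P (i - 1) : ℤ) : ℚ) >
        ((Q i - Q (i + 1) : ℤ) : ℚ) / ((P (i + 1) - P i : ℤ) : ℚ))
    (hgcd : ∀ i, 1 ≤ i → i ≤ n → Int.gcd (P i - P (i - 1)) (Q (i - 1) - Q i) = 1) :
    ({ij : ℕ × ℕ | NDcond n P Q ij}.ncard : ℤ) =
      (∑ i ∈ Finset.Icc 1 n,
        (P i - P (i - 1) - 1) * (Q (i - 1) - Q i - 1) / 2) +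
      ∑ i ∈ Finset.Icc 1 (n - 1), (P i - P (i - 1)) * Q i := by
  classical
  have hp : ∀ k, 1 ≤ k → k ≤ n → 0 < pkf P k := by
    intro k h1 h2
    have := hPmono (k-1) (by omega)
    rw [show k-1+1 = k by omega] at this
    unfold pkf; omega
  have hq : ∀ k, 1 ≤ k → k ≤ n → 0 < qkf Q k := by
    intro k h1 h2
    have := hQmono (k-1) (by omega)
    rw [show k-1+1 = k by omega] at this
    unfold qkf; omega
  have hPnn : ∀ k, k ≤ n → 0 ≤ P k := by
    intro k hk
    have := Pmono' n P hPmono 0 k (by omega) hk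
    omega
  have hQnn : ∀ k, k ≤ n → 0 ≤ Q k := by
    intro k hk
    have := Qmono' n Q hQmono k n hk le_rfl
    omega
  have hcross : ∀ a b, 1 ≤ a → a ≤ b → b ≤ n →
      qkf Q b * pkf P a ≤ qkf Q a * pkf P b := by
    intro a b h1 h2 h3
    have := cross n P Q hconv hPmono hQmono a b h1 h2 h3
    unfold pkf qkf; exact this
  have hvert : ∀ m k, 1 ≤ m → m ≤ n → k ≤ n →
      cf P Q m ≤ qkf Q m * P k + pkf P m * Q k := by
    intro m k h1 h2 h3
    have := vertex_above n P Q hPmono hQmono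
      (cross n P Q hconv hPmono hQmono) m k h1 h2 h3
    unfold cf pkf qkf; linarith
  have hcnn : ∀ k, 1 ≤ k → k ≤ n → 0 ≤ cf P Q k := by
    intro k h1 h2
    unfold cf
    have := mul_nonneg (hq k h1 h2).le (hPnn k h2)
    have := mul_nonneg (hp k h1 h2).le (hQnn k h2)
    linarith
  set p' : ℕ := (P n).toNat with hp'
  set B : ℕ := (∑ k ∈ Finset.Icc 1 n, (cf P Q k).toNat) + 1 with hB
  have hcB : ∀ k, 1 ≤ k → k ≤ n → (cf P Q k) < (B:ℤ) := by
    intro k h1 h2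
    have hle : (cf P Q k).toNat ≤ ∑ k ∈ Finset.Icc 1 n, (cf P Q k).toNat :=
      Finset.single_le_sum (f := fun k => (cf P Q k).toNat)
        (fun i _ => Nat.zero_le _) (Finset.mem_Icc.mpr ⟨h1, h2⟩)
    omega
  set F : Finset (ℕ × ℕ) :=
    (Finset.range p' ×ˢ Finset.range B).filter (NDcond n P Q) with hF
  have hTF : {ij : ℕ × ℕ | NDcond n P Q ij} = ↑F := by
    ext ⟨i, j⟩
    simp only [Set.mem_setOf_eq, hF, Finset.coe_filter, Finset.mem_coe,
      Finset.mem_product, Finset.mem_range, Set.mem_setOf_eq]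
    constructor
    · intro hcond
      refine ⟨⟨?_, ?_⟩, hcond⟩
      · obtain ⟨m, hm1, hmn, hle⟩ := hcond
        simp only at hle
        have h1 : cf P Q m ≤ qkf Q m * P n := by
          have := hvert m n hm1 hmn le_rfl
          rw [hQn] at this; linarith
        have h2 : 0 < pkf P m * ((j:ℤ)+1) :=
          mul_pos (hp m hm1 hmn) (by positivity)
        have h3 : qkf Q m * ((i:ℤ)+1) < qkf Q m * P n := by linarith
        have h4 : ((i:ℤ)+1) < P n := lt_of_mul_lt_mul_left h3 (hq m hm1 hmn).le
        omega
      · obtain ⟨m, hm1, hmn, hle⟩ := hcond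
        simp only at hle
        have h2 : 0 ≤ qkf Q m * ((i:ℤ)+1) :=
          mul_nonneg (hq m hm1 hmn).le (by positivity)
        have h3 : ((j:ℤ)+1) ≤ pkf P m * ((j:ℤ)+1) :=
          le_mul_of_one_le_left (by positivity) (hp m hm1 hmn)
        have := hcB m hm1 hmn
        omega
    · exact fun h => h.2
  rw [hTF, Set.ncard_coe_finset]
  -- card as double sum
  have hcard : F.card
      = ∑ i ∈ Finset.range p',
          (Finset.filter (fun j => NDcond n P Q (i, j)) (Finset.range B)).card := by
    rw [hF, Finset.card_filter, Finset.sum_product]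
    exact Finset.sum_congr rfl fun i _ => (Finset.card_filter _ _).symm
  -- column count
  have hcol : ∀ (i k : ℕ), 1 ≤ k → k ≤ n → P (k-1) ≤ (i:ℤ) → (i:ℤ) < P k →
      ((Finset.filter (fun j => NDcond n P Q (i, j)) (Finset.range B)).card : ℤ)
        = (cf P Q k - qkf Q k * ((i:ℤ)+1)) / pkf P k := by
    intro i k hk1 hkn hi1 hi2
    have hpk := hp k hk1 hkn
    have hqk := hq k hk1 hkn
    set N : ℤ := (cf P Q k - qkf Q k * ((i:ℤ)+1)) / pkf P k with hN
    have hnum0 : 0 ≤ cf P Q k - qkf Q k * ((i:ℤ)+1) := by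
      have h1 : (i:ℤ)+1 ≤ P k := by omega
      have h2 : qkf Q k * ((i:ℤ)+1) ≤ qkf Q k * P k :=
        mul_le_mul_of_nonneg_left h1 hqk.le
      have h3 : cf P Q k - qkf Q k * P k = pkf P k * Q k := by unfold cf qkf pkf; ring
      have h4 : 0 ≤ pkf P k * Q k := mul_nonneg hpk.le (hQnn k hkn)
      linarith
    have hN0 : 0 ≤ N := Int.ediv_nonneg hnum0 hpk.le
    have hNB : N < (B:ℤ) := by
      have h1 : N ≤ cf P Q k - qkf Q k * ((i:ℤ)+1) := Int.ediv_le_self _ hnum0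
      have h2 : 0 ≤ qkf Q k * ((i:ℤ)+1) := mul_nonneg hqk.le (by positivity)
      have := hcB k hk1 hkn
      omega
    have hfil : Finset.filter (fun j => NDcond n P Q (i, j)) (Finset.range B)
        = Finset.range N.toNat := by
      ext j
      simp only [Finset.mem_filter, Finset.mem_range]
      rw [col_iff n P Q hp hcross hvert i j k hk1 hkn hi1 hi2]
      rw [show pkf P k * ((j:ℤ)+1) = ((j:ℤ)+1) * pkf P k by ring]
      rw [← Int.le_ediv_iff_mul_le hpk, ← hN]
      omega
    rw [hfil, Finset.card_range]
    omega
  -- partition of columns into blocks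
  have hpart : Finset.range p'
      = (Finset.Icc 1 n).biUnion
          (fun k => Finset.Ico (P (k-1)).toNat (P k).toNat) := by
    ext i
    simp only [Finset.mem_range, Finset.mem_biUnion, Finset.mem_Ico, Finset.mem_Icc]
    constructor
    · intro hi
      obtain ⟨k, h1, h2, h3, h4⟩ := block_exists n P hP0 hPmono n le_rfl i
        (Int.natCast_nonneg i) (by omega)
      exact ⟨k, ⟨h1, h2⟩, by omega, by omega⟩
    · rintro ⟨k, ⟨hk1, hkn⟩, h1, h2⟩
      have := Pmono' n P hPmono k n hkn le_rfl
      omega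
  have hdisj : ∀ k ∈ Finset.Icc 1 n, ∀ l ∈ Finset.Icc 1 n, k ≠ l →
      Disjoint (Finset.Ico (P (k-1)).toNat (P k).toNat)
        (Finset.Ico (P (l-1)).toNat (P l).toNat) := by
    intro k hk l hl hkl
    simp only [Finset.mem_Icc] at hk hl
    rw [Finset.disjoint_left]
    intro i hik hil
    simp only [Finset.mem_Ico] at hik hil
    rcases lt_or_gt_of_ne hkl with h | h
    · have := Pmono' n P hPmono k (l-1) (by omega) (by omega)
      omega
    · have := Pmono' n P hPmono l (k-1) (by omega) (by omega)
      omega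
  -- per-block sums
  have hblock : ∀ k, 1 ≤ k → k ≤ n →
      ∑ i ∈ Finset.Ico (P (k-1)).toNat (P k).toNat,
        ((Finset.filter (fun j => NDcond n P Q (i, j)) (Finset.range B)).card : ℤ)
      = pkf P k * Q k + ((pkf P k - 1) * (qkf Q k - 1)) / 2 := by
    intro k hk1 hkn
    have hpk := hp k hk1 hkn
    have hqk := hq k hk1 hkn
    have hPk1nn : 0 ≤ P (k-1) := hPnn (k-1) (by omega)
    have hsc : ∀ i ∈ Finset.Ico (P (k-1)).toNat (P k).toNat,
        ((Finset.filter (fun j => NDcond n P Q (i, j)) (Finset.range B)).card : ℤ)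
        = (pkf P k * Q (k-1) - qkf Q k * ((i:ℤ) + 1 - P (k-1))) / pkf P k := by
      intro i hi
      simp only [Finset.mem_Ico] at hi
      rw [hcol i k hk1 hkn (by omega) (by omega)]
      congr 1
      unfold cf qkf pkf; ring
    rw [Finset.sum_congr rfl hsc]
    have hre : ∑ i ∈ Finset.Ico (P (k-1)).toNat (P k).toNat,
        (pkf P k * Q (k-1) - qkf Q k * ((i:ℤ) + 1 - P (k-1))) / pkf P k
        = ∑ t ∈ Finset.Icc 1 (pkf P k),
            (pkf P k * Q (k-1) - qkf Q k * t) / pkf P k := by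
      refine Finset.sum_nbij' (fun i => (i:ℤ) + 1 - P (k-1))
        (fun t => (t + P (k-1) - 1).toNat) ?_ ?_ ?_ ?_ ?_
      · intro i hi
        simp only [Finset.mem_Ico] at hi
        simp only [Finset.mem_Icc]
        unfold pkf
        omega
      · intro t ht
        simp only [Finset.mem_Icc] at ht
        simp only [Finset.mem_Ico]
        unfold pkf at ht
        omega
      · intro i hi
        simp only [Finset.mem_Ico] at hi
        show ((i:ℤ) + 1 - P (k-1) + P (k-1) - 1).toNat = i
        omega
      · intro t ht
        simp only [Finset.mem_Icc] at ht
        show ((((t + P (k-1) - 1).toNat : ℕ) : ℤ) + 1 - P (k-1)) = t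
        omega
      · intro i _
        rfl
    rw [hre]
    have hg : Int.gcd (pkf P k) (qkf Q k) = 1 := hgcd k hk1 hkn
    rw [block_sum hpk hqk hg]
    congr 1
    unfold qkf; ring
  -- assemble
  have hc2 : (F.card : ℤ) = ∑ i ∈ Finset.range p',
      ((Finset.filter (fun j => NDcond n P Q (i, j)) (Finset.range B)).card : ℤ) := by
    rw [hcard]; push_cast; rfl
  rw [hc2, hpart, Finset.sum_biUnion (fun k hk l hl hkl => hdisj k hk l hl hkl)]
  have hsum : ∑ k ∈ Finset.Icc 1 n, ∑ i ∈ Finset.Ico (P (k-1)).toNat (P k).toNat,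
      ((Finset.filter (fun j => NDcond n P Q (i, j)) (Finset.range B)).card : ℤ)
      = ∑ k ∈ Finset.Icc 1 n, (pkf P k * Q k + ((pkf P k - 1) * (qkf Q k - 1)) / 2) :=
    Finset.sum_congr rfl (fun k hk => by
      simp only [Finset.mem_Icc] at hk
      exact hblock k hk.1 hk.2)
  rw [hsum, Finset.sum_add_distrib]
  have hD : ∑ k ∈ Finset.Icc 1 n, ((pkf P k - 1) * (qkf Q k - 1)) / 2
      = ∑ i ∈ Finset.Icc 1 n, (P i - P (i - 1) - 1) * (Q (i - 1) - Q i - 1) / 2 :=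
    Finset.sum_congr rfl (fun k _ => by unfold pkf qkf; rfl)
  have hPQ : ∑ k ∈ Finset.Icc 1 n, pkf P k * Q k
      = ∑ i ∈ Finset.Icc 1 (n - 1), (P i - P (i - 1)) * Q i := by
    have hins : Finset.Icc 1 n = insert n (Finset.Icc 1 (n-1)) := by
      ext t
      simp only [Finset.mem_Icc, Finset.mem_insert]
      omega
    rw [hins, Finset.sum_insert (by simp only [Finset.mem_Icc]; omega)]
    have hz : pkf P n * Q n = 0 := by rw [hQn]; ring
    rw [hz, zero_add]
    exact Finset.sum_congr rfl (fun k _ => by unfold pkf; rfl)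
  rw [hD, hPQ]
  ring

section Geom
variable (n : ℕ) (P Q : ℕ → ℤ)

lemma block_existsR (hP0 : P 0 = 0)
    (hPmono : ∀ i < n, P i < P (i + 1)) :
    ∀ m, m ≤ n → ∀ x : ℝ, 0 ≤ x → x < (P m : ℝ) →
      ∃ k, 1 ≤ k ∧ k ≤ m ∧ ((P (k-1) : ℝ)) ≤ x ∧ x < (P k : ℝ) := by
  intro m
  induction m with
  | zero =>
    intro _ x hx0 hxm
    rw [hP0] at hxm; norm_num at hxm; linarith
  | succ b ih =>
    intro hbn x hx0 hxm
    rcases lt_or_ge x (P b : ℝ) with h | h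
    · rcases Nat.eq_zero_or_pos b with hb | hb
      · subst hb; rw [hP0] at h; norm_num at h; linarith
      · obtain ⟨k, h1, h2, h3, h4⟩ := ih (by omega) x hx0 h
        exact ⟨k, h1, by omega, h3, h4⟩
    · exact ⟨b+1, by omega, le_refl _, by simpa using h, hxm⟩

theorem minkowski_desc
    (hn : 1 ≤ n) (hP0 : P 0 = 0) (hQn : Q n = 0)
    (hPmono : ∀ i < n, P i < P (i + 1))
    (hp : ∀ k, 1 ≤ k → k ≤ n → 0 < pkf P k)
    (hq : ∀ k, 1 ≤ k → k ≤ n → 0 < qkf Q k)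
    (hPnn : ∀ k, k ≤ n → 0 ≤ P k) (hQnn : ∀ k, k ≤ n → 0 ≤ Q k)
    (hvert : ∀ m k, 1 ≤ m → m ≤ n → k ≤ n →
      cf P Q m ≤ qkf Q m * P k + pkf P m * Q k) :
    convexHull ℝ {x : ℝ × ℝ | ∃ i ≤ n, x = ((P i : ℝ), (Q i : ℝ))} +
      Set.Ici (0 : ℝ) ×ˢ Set.Ici (0 : ℝ)
    = {w : ℝ × ℝ | 0 ≤ w.1 ∧ 0 ≤ w.2 ∧ ∀ k, 1 ≤ k → k ≤ n →
        (cf P Q k : ℝ) ≤ (qkf Q k : ℝ) * w.1 + (pkf P k : ℝ) * w.2} := by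
  set V := {x : ℝ × ℝ | ∃ i ≤ n, x = ((P i : ℝ), (Q i : ℝ))} with hV
  set S : Set (ℝ × ℝ) := {w : ℝ × ℝ | 0 ≤ w.1 ∧ 0 ≤ w.2 ∧ ∀ k, 1 ≤ k → k ≤ n →
        (cf P Q k : ℝ) ≤ (qkf Q k : ℝ) * w.1 + (pkf P k : ℝ) * w.2} with hS
  have hSconv : Convex ℝ S := by
    intro x hx y hy a b ha hb hab
    obtain ⟨hx1, hx2, hx3⟩ := hx
    obtain ⟨hy1, hy2, hy3⟩ := hy
    have hfst : (a • x + b • y).1 = a * x.1 + b * y.1 := rfl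
    have hsnd : (a • x + b • y).2 = a * x.2 + b * y.2 := rfl
    refine ⟨by rw [hfst]; positivity, by rw [hsnd]; positivity, ?_⟩
    intro k hk1 hkn
    rw [hfst, hsnd]
    have h1 := mul_le_mul_of_nonneg_left (hx3 k hk1 hkn) ha
    have h2 := mul_le_mul_of_nonneg_left (hy3 k hk1 hkn) hb
    have : (cf P Q k : ℝ) = a * (cf P Q k : ℝ) + b * (cf P Q k : ℝ) := by
      rw [← add_mul, hab, one_mul]
    rw [this]
    nlinarith [h1, h2]
  have hVS : V ⊆ S := by
    rintro w ⟨i, hi, rfl⟩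
    refine ⟨?_, ?_, ?_⟩
    · show (0:ℝ) ≤ (P i : ℝ)
      exact_mod_cast hPnn i hi
    · show (0:ℝ) ≤ (Q i : ℝ)
      exact_mod_cast hQnn i hi
    · intro k hk1 hkn
      show (cf P Q k : ℝ) ≤ (qkf Q k : ℝ) * (P i : ℝ) + (pkf P k : ℝ) * (Q i : ℝ)
      exact_mod_cast hvert k i hk1 hkn hi
  apply Set.Subset.antisymm
  · rintro w hw
    rw [Set.mem_add] at hw
    obtain ⟨h, hh, v, hv, rfl⟩ := hw
    have hhS : h ∈ S := convexHull_min hVS hSconv hh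
    obtain ⟨h1, h2, h3⟩ := hhS
    rw [Set.mem_prod] at hv
    obtain ⟨hv1, hv2⟩ := hv
    rw [Set.mem_Ici] at hv1 hv2
    refine ⟨by simpa using add_nonneg h1 hv1, by simpa using add_nonneg h2 hv2, ?_⟩
    intro k hk1 hkn
    have h4 := h3 k hk1 hkn
    have h5 : 0 ≤ (qkf Q k : ℝ) * v.1 + (pkf P k : ℝ) * v.2 := by
      have := hq k hk1 hkn
      have := hp k hk1 hkn
      have hqr : (0:ℝ) ≤ (qkf Q k : ℝ) := by exact_mod_cast (hq k hk1 hkn).le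
      have hpr : (0:ℝ) ≤ (pkf P k : ℝ) := by exact_mod_cast (hp k hk1 hkn).le
      positivity
    have hfst : (h + v).1 = h.1 + v.1 := rfl
    have hsnd : (h + v).2 = h.2 + v.2 := rfl
    rw [hfst, hsnd]
    linarith
  · intro w hw
    obtain ⟨hw1, hw2, hw3⟩ := hw
    rcases le_or_gt (P n : ℝ) w.1 with h | h
    · rw [Set.mem_add]
      refine ⟨((P n : ℝ), (Q n : ℝ)), subset_convexHull ℝ V ⟨n, le_rfl, rfl⟩,
        (w.1 - (P n : ℝ), w.2 - (Q n : ℝ)), ?_, ?_⟩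
      · rw [Set.mem_prod]
        constructor
        · show w.1 - (P n:ℝ) ∈ Set.Ici (0:ℝ)
          rw [Set.mem_Ici]; linarith
        · show w.2 - (Q n:ℝ) ∈ Set.Ici (0:ℝ)
          rw [Set.mem_Ici, hQn]; push_cast; linarith
      · refine Prod.ext ?_ ?_
        · show (P n:ℝ) + (w.1 - (P n:ℝ)) = w.1
          ring
        · show (Q n:ℝ) + (w.2 - (Q n:ℝ)) = w.2
          ring
    · obtain ⟨k, hk1, hkn, hx1, hx2⟩ := block_existsR n P hP0 hPmono n le_rfl w.1 hw1 h
      have hbR : (0:ℝ) < (P k : ℝ) - (P (k-1) : ℝ) := by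
        have := hp k hk1 hkn; unfold pkf at this
        have : (0:ℝ) < ((P k - P (k-1) : ℤ) : ℝ) := by exact_mod_cast this
        push_cast at this; linarith
      set θ : ℝ := (w.1 - (P (k-1):ℝ)) / ((P k : ℝ) - (P (k-1) : ℝ)) with hθ
      have hθ0 : 0 ≤ θ := by
        apply div_nonneg _ hbR.le; linarith
      have hθ1 : θ ≤ 1 := by
        rw [div_le_one hbR]; linarith
      have hθb : θ * ((P k : ℝ) - (P (k-1) : ℝ)) = w.1 - (P (k-1):ℝ) :=
        div_mul_cancel₀ _ hbR.ne'
      set z2 : ℝ := (1-θ) * (Q (k-1):ℝ) + θ * (Q k:ℝ) with hz2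
      have hzmem : (((1-θ) * (P (k-1):ℝ) + θ * (P k:ℝ), z2) : ℝ × ℝ)
          ∈ convexHull ℝ V := by
        have hv1 : ((P (k-1):ℝ), (Q (k-1):ℝ)) ∈ convexHull ℝ V :=
          subset_convexHull ℝ V ⟨k-1, by omega, rfl⟩
        have hv2 : ((P k:ℝ), (Q k:ℝ)) ∈ convexHull ℝ V :=
          subset_convexHull ℝ V ⟨k, hkn, rfl⟩
        have := (convex_convexHull ℝ V) hv1 hv2 (a := 1-θ) (b := θ) (by linarith) hθ0 (by ring)
        simpa [Prod.smul_mk, smul_eq_mul, Prod.mk_add_mk, hz2] using this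
      have hz1 : (1-θ) * (P (k-1):ℝ) + θ * (P k:ℝ) = w.1 := by
        linear_combination hθb
      have hwz : z2 ≤ w.2 := by
        have hcon := hw3 k hk1 hkn
        have hcf : (cf P Q k : ℝ) = ((Q (k-1):ℝ) - (Q k:ℝ)) * (P (k-1):ℝ)
            + ((P k:ℝ) - (P (k-1):ℝ)) * (Q (k-1):ℝ) := by
          unfold cf qkf pkf; push_cast; ring
        have hqc : (qkf Q k : ℝ) = (Q (k-1):ℝ) - (Q k:ℝ) := by
          unfold qkf; push_cast; ring
        have hpc : (pkf P k : ℝ) = (P k:ℝ) - (P (k-1):ℝ) := by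
          unfold pkf; push_cast; ring
        rw [hcf, hqc, hpc] at hcon
        have key : ((P k:ℝ) - (P (k-1):ℝ)) * z2 + ((Q (k-1):ℝ) - (Q k:ℝ)) * w.1
            = ((Q (k-1):ℝ) - (Q k:ℝ)) * (P (k-1):ℝ)
            + ((P k:ℝ) - (P (k-1):ℝ)) * (Q (k-1):ℝ) := by
          rw [hz2]
          linear_combination ((Q k:ℝ) - (Q (k-1):ℝ)) * hθb
        have : ((P k:ℝ) - (P (k-1):ℝ)) * z2 ≤ ((P k:ℝ) - (P (k-1):ℝ)) * w.2 := by
          linarith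
        exact le_of_mul_le_mul_left this hbR
      rw [Set.mem_add]
      refine ⟨((1-θ) * (P (k-1):ℝ) + θ * (P k:ℝ), z2), hzmem,
        (0, w.2 - z2), ?_, ?_⟩
      · rw [Set.mem_prod]
        constructor
        · show (0:ℝ) ∈ Set.Ici (0:ℝ)
          rw [Set.mem_Ici]
        · show w.2 - z2 ∈ Set.Ici (0:ℝ)
          rw [Set.mem_Ici]; linarith
      · refine Prod.ext ?_ ?_
        · show (1-θ) * (P (k-1):ℝ) + θ * (P k:ℝ) + 0 = w.1
          rw [add_zero, hz1]
        · show z2 + (w.2 - z2) = w.2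
          ring
end Geom

section G2
variable (n : ℕ) (P Q : ℕ → ℤ)
theorem gamma_desc
    (hn : 1 ≤ n) (hP0 : P 0 = 0) (hQn : Q n = 0)
    (hPmono : ∀ i < n, P i < P (i + 1))
    (hp : ∀ k, 1 ≤ k → k ≤ n → 0 < pkf P k)
    (hq : ∀ k, 1 ≤ k → k ≤ n → 0 < qkf Q k)
    (hPnn : ∀ k, k ≤ n → 0 ≤ P k) (hQnn : ∀ k, k ≤ n → 0 ≤ Q k)
    (hvert : ∀ m k, 1 ≤ m → m ≤ n → k ≤ n →
      cf P Q m ≤ qkf Q m * P k + pkf P m * Q k)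
    (hcpos : ∀ k, 1 ≤ k → k ≤ n → 0 < cf P Q k) :
    gammaMinus n P Q = ⋃ k ∈ Finset.Icc 1 n,
      ((Set.Ici (0:ℝ) ×ˢ Set.Ici (0:ℝ)) ∩
        {w : ℝ × ℝ | (qkf Q k : ℝ) * w.1 + (pkf P k : ℝ) * w.2 ≤ (cf P Q k : ℝ)}) := by
  unfold gammaMinus
  rw [minkowski_desc n P Q hn hP0 hQn hPmono hp hq hPnn hQnn hvert]
  have hdiff : (Set.Ici (0:ℝ) ×ˢ Set.Ici (0:ℝ)) \
      {w : ℝ × ℝ | 0 ≤ w.1 ∧ 0 ≤ w.2 ∧ ∀ k, 1 ≤ k → k ≤ n →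
        (cf P Q k : ℝ) ≤ (qkf Q k : ℝ) * w.1 + (pkf P k : ℝ) * w.2}
      = ⋃ k ∈ Finset.Icc 1 n,
        ((Set.Ici (0:ℝ) ×ˢ Set.Ici (0:ℝ)) ∩
          {w : ℝ × ℝ | (qkf Q k : ℝ) * w.1 + (pkf P k : ℝ) * w.2 < (cf P Q k : ℝ)}) := by
    ext w
    simp only [Set.mem_diff, Set.mem_setOf_eq, Set.mem_iUnion, Set.mem_inter_iff,
      Finset.mem_Icc, Set.mem_prod, Set.mem_Ici, exists_prop]
    constructor
    · rintro ⟨⟨h1, h2⟩, hns⟩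
      push_neg at hns
      obtain ⟨k, hk1, hkn, hlt⟩ := hns h1 h2
      exact ⟨k, ⟨hk1, hkn⟩, ⟨h1, h2⟩, hlt⟩
    · rintro ⟨k, ⟨hk1, hkn⟩, ⟨h1, h2⟩, hlt⟩
      refine ⟨⟨h1, h2⟩, fun hS => ?_⟩
      exact absurd (hS.2.2 k hk1 hkn) (not_le.mpr hlt)
  rw [hdiff, ← Finset.set_biUnion_coe,
    Set.Finite.closure_biUnion (Finset.finite_toSet _), Finset.set_biUnion_coe]
  refine Set.iUnion₂_congr fun k hk => ?_
  simp only [Finset.mem_Icc] at hk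
  obtain ⟨hk1, hkn⟩ := hk
  have hqr : (0:ℝ) ≤ (qkf Q k : ℝ) := by exact_mod_cast (hq k hk1 hkn).le
  have hpr : (0:ℝ) ≤ (pkf P k : ℝ) := by exact_mod_cast (hp k hk1 hkn).le
  have hcr : (0:ℝ) < (cf P Q k : ℝ) := by exact_mod_cast hcpos k hk1 hkn
  apply Set.Subset.antisymm
  · apply closure_minimal
    · exact Set.inter_subset_inter_right _ (fun w hw => le_of_lt (Set.mem_setOf_eq ▸ hw))
    · exact ((isClosed_Ici.prod isClosed_Ici).inter
        (isClosed_le (by fun_prop) continuous_const))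
  · rintro w ⟨hwq, hwc⟩
    rw [Set.mem_prod, Set.mem_Ici, Set.mem_Ici] at hwq
    obtain ⟨h1, h2⟩ := hwq
    rw [Set.mem_setOf_eq] at hwc
    have hf0 : 0 ≤ (qkf Q k : ℝ) * w.1 + (pkf P k : ℝ) * w.2 :=
      add_nonneg (mul_nonneg hqr h1) (mul_nonneg hpr h2)
    refine mem_closure_of_tendsto (f := fun m : ℕ => (1 - 1/((m:ℝ)+1)) • w)
      (b := atTop) ?_ ?_
    · have h0 : Tendsto (fun m : ℕ => 1/((m:ℝ)+1)) atTop (𝓝 0) :=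
        tendsto_one_div_add_atTop_nhds_zero_nat
      have h1' : Tendsto (fun m : ℕ => 1 - 1/((m:ℝ)+1)) atTop (𝓝 1) := by
        simpa using tendsto_const_nhds.sub h0
      simpa using h1'.smul_const w
    · apply Filter.Eventually.of_forall
      intro m
      have hmp : (0:ℝ) < (m:ℝ) + 1 := by positivity
      have hs0 : 0 ≤ 1 - 1/((m:ℝ)+1) := by
        have : 1/((m:ℝ)+1) ≤ 1 := by
          rw [div_le_one hmp]
          have : (0:ℝ) ≤ (m:ℝ) := Nat.cast_nonneg m
          linarith
        linarith
      have hs1 : 1 - 1/((m:ℝ)+1) < 1 := by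
        have : 0 < 1/((m:ℝ)+1) := by positivity
        linarith
      set s : ℝ := 1 - 1/((m:ℝ)+1) with hs
      constructor
      · rw [Set.mem_prod, Set.mem_Ici, Set.mem_Ici]
        constructor
        · show 0 ≤ s * w.1
          exact mul_nonneg hs0 h1
        · show 0 ≤ s * w.2
          exact mul_nonneg hs0 h2
      · rw [Set.mem_setOf_eq]
        show (qkf Q k : ℝ) * (s * w.1) + (pkf P k : ℝ) * (s * w.2) < (cf P Q k : ℝ)
        have e1 : (qkf Q k : ℝ) * (s * w.1) + (pkf P k : ℝ) * (s * w.2)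
            = s * ((qkf Q k : ℝ) * w.1 + (pkf P k : ℝ) * w.2) := by ring
        rw [e1]
        have e2 : s * ((qkf Q k : ℝ) * w.1 + (pkf P k : ℝ) * w.2)
            ≤ s * (cf P Q k : ℝ) := mul_le_mul_of_nonneg_left hwc hs0
        nlinarith [e2, hs1, hcr]

theorem squares_eq
    (hn : 1 ≤ n) (hP0 : P 0 = 0) (hQn : Q n = 0)
    (hPmono : ∀ i < n, P i < P (i + 1))
    (hp : ∀ k, 1 ≤ k → k ≤ n → 0 < pkf P k)
    (hq : ∀ k, 1 ≤ k → k ≤ n → 0 < qkf Q k)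
    (hPnn : ∀ k, k ≤ n → 0 ≤ P k) (hQnn : ∀ k, k ≤ n → 0 ≤ Q k)
    (hvert : ∀ m k, 1 ≤ m → m ≤ n → k ≤ n →
      cf P Q m ≤ qkf Q m * P k + pkf P m * Q k)
    (hcpos : ∀ k, 1 ≤ k → k ≤ n → 0 < cf P Q k) :
    {ij : ℕ × ℕ | unitSq ij.1 ij.2 ⊆ gammaMinus n P Q}
      = {ij : ℕ × ℕ | NDcond n P Q ij} := by
  ext ⟨i, j⟩
  simp only [Set.mem_setOf_eq]
  rw [gamma_desc n P Q hn hP0 hQn hPmono hp hq hPnn hQnn hvert hcpos]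
  constructor
  · intro hsub
    have hcorner : ((((i:ℤ):ℝ) + 1, ((j:ℤ):ℝ) + 1) : ℝ × ℝ) ∈ unitSq (i:ℤ) (j:ℤ) := by
      unfold unitSq
      rw [Set.mem_prod]
      constructor <;> (rw [Set.mem_Icc]; constructor <;> norm_num)
    have hmem := hsub hcorner
    rw [Set.mem_iUnion₂] at hmem
    obtain ⟨k, hk, _, hle⟩ := hmem
    rw [Finset.mem_Icc] at hk
    rw [Set.mem_setOf_eq] at hle
    refine ⟨k, hk.1, hk.2, ?_⟩
    dsimp only at hle ⊢
    push_cast at hle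
    exact_mod_cast hle
  · rintro ⟨k, hk1, hkn, hle⟩
    simp only at hle
    intro w hw
    unfold unitSq at hw
    rw [Set.mem_prod, Set.mem_Icc, Set.mem_Icc] at hw
    obtain ⟨⟨hw1, hw2⟩, hw3, hw4⟩ := hw
    rw [Set.mem_iUnion₂]
    refine ⟨k, Finset.mem_Icc.mpr ⟨hk1, hkn⟩, ?_, ?_⟩
    · rw [Set.mem_prod, Set.mem_Ici, Set.mem_Ici]
      have h1 : (0:ℝ) ≤ ((i:ℤ):ℝ) := by exact_mod_cast Int.natCast_nonneg i
      have h2 : (0:ℝ) ≤ ((j:ℤ):ℝ) := by exact_mod_cast Int.natCast_nonneg j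
      exact ⟨le_trans h1 hw1, le_trans h2 hw3⟩
    · rw [Set.mem_setOf_eq]
      have hqr : (0:ℝ) ≤ (qkf Q k : ℝ) := by exact_mod_cast (hq k hk1 hkn).le
      have hpr : (0:ℝ) ≤ (pkf P k : ℝ) := by exact_mod_cast (hp k hk1 hkn).le
      have hleR : (qkf Q k : ℝ) * (((i:ℤ):ℝ) + 1) + (pkf P k : ℝ) * (((j:ℤ):ℝ) + 1)
          ≤ (cf P Q k : ℝ) := by exact_mod_cast hle
      have e1 := mul_le_mul_of_nonneg_left hw2 hqr
      have e2 := mul_le_mul_of_nonneg_left hw4 hpr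
      linarith

end G2
end NDP

/-- For a Newton diagram datum with `gcd(pᵢ,qᵢ) = 1`, the number of unit lattice squares
with nonnegative-integer corner contained in `Γ₋` equals
`Σ_{i=1}^{n} (pᵢ-1)(qᵢ-1)/2 + Σ_{i=1}^{n-1} pᵢQᵢ`. -/



theorem num_squares_in_gammaMinus (n : ℕ) (hn : 1 ≤ n) (P Q : ℕ → ℤ)
    (hP0 : P 0 = 0) (hQn : Q n = 0)
    (hPmono : ∀ i < n, P i < P (i + 1))
    (hQmono : ∀ i < n, Q (i + 1) < Q i)
    (hconv : ∀ i, 1 ≤ i → i < n →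
      ((Q (i - 1) - Q i : ℤ) : ℚ) / ((P i - P (i - 1) : ℤ) : ℚ) >
        ((Q i - Q (i + 1) : ℤ) : ℚ) / ((P (i + 1) - P i : ℤ) : ℚ))
    (hgcd : ∀ i, 1 ≤ i → i ≤ n → Int.gcd (P i - P (i - 1)) (Q (i - 1) - Q i) = 1) :
    ({ij : ℕ × ℕ | unitSq ij.1 ij.2 ⊆ gammaMinus n P Q}.ncard : ℤ) =
      (∑ i ∈ Finset.Icc 1 n,
        (P i - P (i - 1) - 1) * (Q (i - 1) - Q i - 1) / 2) +
      ∑ i ∈ Finset.Icc 1 (n - 1), (P i - P (i - 1)) * Q i := by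
  classical
  have hp : ∀ k, 1 ≤ k → k ≤ n → 0 < NDP.pkf P k := by
    intro k h1 h2
    have := hPmono (k-1) (by omega)
    rw [show k-1+1 = k by omega] at this
    simp only [NDP.pkf]; omega
  have hq : ∀ k, 1 ≤ k → k ≤ n → 0 < NDP.qkf Q k := by
    intro k h1 h2
    have := hQmono (k-1) (by omega)
    rw [show k-1+1 = k by omega] at this
    simp only [NDP.qkf]; omega
  have hPnn : ∀ k, k ≤ n → 0 ≤ P k := by
    intro k hk
    have := NDP.Pmono' n P hPmono 0 k (by omega) hk
    omega
  have hQnn : ∀ k, k ≤ n → 0 ≤ Q k := by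
    intro k hk
    have := NDP.Qmono' n Q hQmono k n hk le_rfl
    omega
  have hvert : ∀ m k, 1 ≤ m → m ≤ n → k ≤ n →
      NDP.cf P Q m ≤ NDP.qkf Q m * P k + NDP.pkf P m * Q k := by
    intro m k h1 h2 h3
    have := NDP.vertex_above n P Q hPmono hQmono
      (NDP.cross n P Q hconv hPmono hQmono) m k h1 h2 h3
    simp only [NDP.cf, NDP.pkf, NDP.qkf]
    linarith
  have hcpos : ∀ k, 1 ≤ k → k ≤ n → 0 < NDP.cf P Q k := by
    intro k h1 h2
    have hPk : 0 < P k := by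
      have h0 : P 0 < P 1 := by simpa using hPmono 0 (by omega)
      have := NDP.Pmono' n P hPmono 1 k h1 h2
      omega
    have e1 := mul_pos (hq k h1 h2) hPk
    have e2 := mul_nonneg (hp k h1 h2).le (hQnn k h2)
    simp only [NDP.cf]
    linarith
  have hset : {ij : ℕ × ℕ | unitSq ij.1 ij.2 ⊆ gammaMinus n P Q}
      = {ij : ℕ × ℕ | NDP.NDcond n P Q ij} :=
    NDP.squares_eq n P Q hn hP0 hQn hPmono hp hq hPnn hQnn hvert hcpos
  rw [hset]
  exact NDP.count_arith n hn P Q hP0 hQn hPmono hQmono hconv hgcd
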